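/- Let μ be a probability measure on a measurable space (Ω, 𝓕), let g : Ω → [0,∞) be measurable with g and g·log g integrable with respect to μ, and let S ∈ 𝓕 be such that g = 0 μ-almost everywhere on Ω ∖ S. If μ(S) ≤ e^{−c} for some c > 0, then c·∫_Ω g dμ ≤ Ent_μ(g). -/

import Mathlib

open MeasureTheory Real Set

/-- Entropy of a nonnegative function `g` with respect to `μ`:
`Ent_μ(g) = μ(g log g) - μ(g) log μ(g)` (with the convention `0 · log 0 = 0`). -/
noncomputable def Ent {Ω : Type*} [MeasurableSpace Ω] (μ : Measure Ω) (g : Ω → ℝ) : ℝ :=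
  (∫ x, g x * Real.log (g x) ∂μ) - (∫ x, g x ∂μ) * Real.log (∫ x, g x ∂μ)

/-- Truncation `f_n := min((|f| - δ^{n/2})₊, δ^{(n+1)/2} - δ^{n/2})`. -/
noncomputable def trunc {Ω : Type*} (f : Ω → ℝ) (δ : ℝ) (n : ℕ) : Ω → ℝ :=
  fun x => min (max (|f x| - δ ^ ((n : ℝ) / 2)) 0) (δ ^ (((n : ℝ) + 1) / 2) - δ ^ ((n : ℝ) / 2))

/-- The `μ`-essential supremum of `|f|`. -/
noncomputable def essNorm {Ω : Type*} [MeasurableSpace Ω] (μ : Measure Ω) (f : Ω → ℝ) : ℝ :=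
  (eLpNorm f ⊤ μ).toReal

/-- `ξ₁(t) := inf { r / (1 - t β(r)) : r > 0, 1 - t β(r) > 0 }`. -/
noncomputable def xi1 (β : ℝ → ℝ) (t : ℝ) : ℝ :=
  sInf {y | ∃ r, 0 < r ∧ 0 < 1 - t * β r ∧ y = r / (1 - t * β r)}

/-- `ξ₂(t) := inf { r / (t - β(r)) : r > 0, t - β(r) > 0 }`. -/
noncomputable def xi2 (β : ℝ → ℝ) (t : ℝ) : ℝ :=
  sInf {y | ∃ r, 0 < r ∧ 0 < t - β r ∧ y = r / (t - β r)}

/-- Entropy lower bound: if `g` vanishes a.e. off a set `S` of measure at most `e^{-c}`,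
then `c ∫ g dμ ≤ Ent_μ(g)`. -/
theorem mul_integral_le_ent_of_support_small {Ω : Type*} [MeasurableSpace Ω]
    (μ : Measure Ω) [IsProbabilityMeasure μ]
    (g : Ω → ℝ) (hg : Measurable g) (hg0 : ∀ x, 0 ≤ g x)
    (hgi : Integrable g μ)
    (hgl : Integrable (fun x => g x * Real.log (g x)) μ)
    (S : Set Ω) (hS : MeasurableSet S)
    (hgS : ∀ᵐ x ∂μ, x ∉ S → g x = 0)
    (c : ℝ) (hc : 0 < c) (hμS : μ S ≤ ENNReal.ofReal (Real.exp (-c))) :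
    c * ∫ x, g x ∂μ ≤ Ent μ g := by
  set I : ℝ := ∫ x, g x ∂μ with hIdef
  set E : ℝ := ∫ x, g x * Real.log (g x) ∂μ with hEdef
  have hI0 : 0 ≤ I := integral_nonneg hg0
  have hglS : ∀ᵐ x ∂μ, x ∉ S → g x * Real.log (g x) = 0 := by
    filter_upwards [hgS] with x hx hxS
    simp [hx hxS]
  by_cases hSz : μ S = 0
  · -- g = 0 a.e., everything is 0
    have hcompl : ∀ᵐ x ∂μ, x ∉ S := by
      rw [ae_iff]
      simpa using measure_mono_null (fun x hx => by simpa using hx) hSz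
    have hg0ae : g =ᵐ[μ] 0 := by
      filter_upwards [hgS, hcompl] with x hx hxS using hx hxS
    have hI : I = 0 := by
      rw [hIdef]; exact integral_eq_zero_of_ae hg0ae
    have hE : E = 0 := by
      rw [hEdef]
      refine integral_eq_zero_of_ae ?_
      filter_upwards [hg0ae] with x hx
      simp [hx]
    simp [Ent, ← hIdef, ← hEdef, hI, hE]
  · have hSm : (0 : ℝ) < (μ S).toReal := ENNReal.toReal_pos hSz (measure_ne_top μ S)
    set m : ℝ := (μ S).toReal with hmdef
    have hmle : m ≤ Real.exp (-c) := by
      rw [hmdef]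
      have := ENNReal.toReal_mono (by simp) hμS
      rwa [ENNReal.toReal_ofReal (Real.exp_pos _).le] at this
    -- Jensen on μ.restrict S
    have hνz : μ.restrict S ≠ 0 := by
      intro h
      exact hSz (by simpa [Measure.restrict_apply_univ] using congrArg (fun ν => ν univ) h)
    haveI : NeZero (μ.restrict S) := ⟨hνz⟩
    have hjensen := Real.convexOn_mul_log.map_average_le
      Real.continuous_mul_log.continuousOn isClosed_Ici
      (Filter.Eventually.of_forall fun x => hg0 x) (hgi.restrict (s := S))
      (f := g) (by exact hgl.restrict (s := S))
    have hSI : ∫ x in S, g x ∂μ = I := setIntegral_eq_integral_of_ae_compl_eq_zero hgS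
    have hSE : ∫ x in S, g x * Real.log (g x) ∂μ = E :=
      setIntegral_eq_integral_of_ae_compl_eq_zero hglS
    rw [average_eq, average_eq] at hjensen
    simp only [Measure.restrict_apply_univ, measureReal_restrict_apply_univ, measureReal_def, hSI, Function.comp, hSE, smul_eq_mul, ← hmdef]
      at hjensen
    -- hjensen : (m⁻¹ * I) * log (m⁻¹ * I) ≤ m⁻¹ * E
    have key : I * Real.log (m⁻¹ * I) ≤ E := by
      have := mul_le_mul_of_nonneg_left hjensen hSm.le
      calc I * Real.log (m⁻¹ * I) = m * (m⁻¹ * I * Real.log (m⁻¹ * I)) := by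
            rw [show m * (m⁻¹ * I * Real.log (m⁻¹ * I))
                = (m * m⁻¹) * (I * Real.log (m⁻¹ * I)) by ring,
              mul_inv_cancel₀ (ne_of_gt hSm), one_mul]
        _ ≤ m * (m⁻¹ * E) := this
        _ = E := by field_simp
    rcases eq_or_lt_of_le hI0 with hI | hI
    · have hE0 : 0 ≤ E := by simpa [← hI] using key
      simp only [Ent, ← hIdef, ← hEdef, ← hI]
      simpa using hE0
    · have hlog : Real.log (m⁻¹ * I) = Real.log I - Real.log m := by
        rw [Real.log_mul (by positivity) (ne_of_gt hI), Real.log_inv]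
        ring
      have hlm : Real.log m ≤ -c := by
        calc Real.log m ≤ Real.log (Real.exp (-c)) :=
              Real.log_le_log hSm hmle
          _ = -c := Real.log_exp _
      have : I * Real.log I + c * I ≤ E := by
        have h1 : I * (Real.log I - Real.log m) ≤ E := by rwa [hlog] at key
        nlinarith [mul_le_mul_of_nonneg_left hlm hI.le]
      simp only [Ent, ← hIdef, ← hEdef]
      linarith
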